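/- Let D ⊆ X be open and H ∈ C^{1,1}(D) a real-valued function (in particular H is strictly Fréchet differentiable at each point). Then for every x̂ ∈ D and every direction d ∈ X, H is twice weakly directionally differentiable at x̂ in direction d, i.e., the set H''(x̂; d) is nonempty; moreover H''(x̂; d) ⊆ {⟨L, d⟩ : L ∈ ∂²H(x̂)(d)}. -/

import Mathlib

open Filter Set

/-- The Clarke generalized directional derivative of `g` at `x₀` in direction `h`. -/
noncomputable def clarkeDeriv {X : Type*} [NormedAddCommGroup X] [NormedSpace ℝ X]
    (g : X → ℝ) (x₀ h : X) : ℝ :=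
  Filter.limsup (fun p : X × ℝ => (g (p.1 + p.2 • h) - g p.1) / p.2)
    ((nhds x₀) ×ˢ (nhdsWithin 0 (Set.Ioi 0)))

/-- The Clarke subdifferential of `g` at `x₀`. -/
def clarkeSubdiff {X : Type*} [NormedAddCommGroup X] [NormedSpace ℝ X]
    (g : X → ℝ) (x₀ : X) : Set (X →L[ℝ] ℝ) :=
  {L | ∀ h, L h ≤ clarkeDeriv g x₀ h}

/-- `f'` is the Gâteaux derivative of `f` on `D`. -/
def IsGateauxDerivOn {X E : Type*} [NormedAddCommGroup X] [NormedSpace ℝ X]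
    [NormedAddCommGroup E] [NormedSpace ℝ E]
    (f : X → E) (f' : X → X →L[ℝ] E) (D : Set X) : Prop :=
  ∀ x ∈ D, ∀ h : X, HasDerivAt (fun t : ℝ => f (x + t • h)) (f' x h) 0

/-- `g` is locally Lipschitz on the set `D`. -/
def LocallyLipschitzOnSet {X E : Type*} [NormedAddCommGroup X] [NormedSpace ℝ X]
    [NormedAddCommGroup E] (g : X → E) (D : Set X) : Prop :=
  ∀ x ∈ D, ∃ ε > 0, ∃ K : NNReal, LipschitzOnWith K g (Metric.ball x ε ∩ D)

/-- `f` is of class `C^{1,1}` on `D`, witnessed by its Gâteaux derivative `f'`. -/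
def IsC11On {X : Type*} [NormedAddCommGroup X] [NormedSpace ℝ X]
    (f : X → ℝ) (f' : X → X →L[ℝ] ℝ) (D : Set X) : Prop :=
  IsGateauxDerivOn f f' D ∧ LocallyLipschitzOnSet f' D

/-- The second-order subdifferential `∂²f(x₀)(d) = ∂⟨f'(·), d⟩(x₀)`. -/
def secondSubdiff {X : Type*} [NormedAddCommGroup X] [NormedSpace ℝ X]
    (f' : X → X →L[ℝ] ℝ) (x₀ d : X) : Set (X →L[ℝ] ℝ) :=
  clarkeSubdiff (fun x => f' x d) x₀

/-- The second-order weak directional derivative set of `H` at `x₀` in direction `d`,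
where `H'` is the (strict) derivative mapping of `H`. -/
noncomputable def secondWeakDirDeriv {X E : Type*} [NormedAddCommGroup X] [NormedSpace ℝ X]
    [NormedAddCommGroup E] [NormedSpace ℝ E]
    (H : X → E) (H' : X → X →L[ℝ] E) (x₀ d : X) : Set E :=
  {y | Filter.liminf
    (fun ε : ℝ => ‖y - (2 / ε ^ 2) • (H (x₀ + ε • d) - H x₀ - ε • (H' x₀ d))‖)
    (nhdsWithin 0 (Set.Ioi 0)) = 0}

open Metric

set_option linter.unusedSectionVars false
set_option linter.unusedVariables false

section ClarkeAux
variable {X : Type*} [NormedAddCommGroup X] [NormedSpace ℝ X]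

noncomputable def cquot (g : X → ℝ) (h : X) : X × ℝ → ℝ :=
  fun p => (g (p.1 + p.2 • h) - g p.1) / p.2

def cfil (x₀ : X) : Filter (X × ℝ) := (nhds x₀) ×ˢ (nhdsWithin 0 (Set.Ioi 0))

instance cfil_neBot (x₀ : X) : (cfil x₀).NeBot :=
  Filter.prod_neBot.mpr ⟨inferInstance, inferInstance⟩

variable {g : X → ℝ} {x₀ : X} {B K' : ℝ} {h : X}

lemma bddle (ev : ∀ᶠ p in cfil x₀, |cquot g h p| ≤ B) :
    IsBoundedUnder (· ≤ ·) (cfil x₀) (cquot g h) :=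
  ⟨B, eventually_map.mpr (ev.mono fun _ hp => (abs_le.mp hp).2)⟩

lemma bddge (ev : ∀ᶠ p in cfil x₀, |cquot g h p| ≤ B) :
    IsBoundedUnder (· ≥ ·) (cfil x₀) (cquot g h) :=
  ⟨-B, eventually_map.mpr (ev.mono fun _ hp => (abs_le.mp hp).1)⟩

lemma cobddle (ev : ∀ᶠ p in cfil x₀, |cquot g h p| ≤ B) :
    IsCoboundedUnder (· ≤ ·) (cfil x₀) (cquot g h) :=
  (bddge ev).isCoboundedUnder_le

lemma cd_le (ev : ∀ᶠ p in cfil x₀, |cquot g h p| ≤ B) :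
    Filter.limsup (cquot g h) (cfil x₀) ≤ B :=
  limsup_le_of_le (cobddle ev) (ev.mono fun _ hp => (abs_le.mp hp).2)

lemma cd_ge (ev : ∀ᶠ p in cfil x₀, |cquot g h p| ≤ B) :
    -B ≤ Filter.limsup (cquot g h) (cfil x₀) :=
  le_limsup_of_frequently_le
    ((ev.mono fun _ hp => (abs_le.mp hp).1).frequently) (bddle ev)

lemma cd_zero' : Filter.limsup (cquot g (0:X)) (cfil x₀) = 0 := by
  have : cquot g (0:X) = fun _ => (0:ℝ) := by
    funext p; simp [cquot]
  rw [this, limsup_const]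


lemma clarkeDeriv_eq {g : X → ℝ} (x₀ h : X) :
    clarkeDeriv g x₀ h = Filter.limsup (cquot g h) (cfil x₀) := rfl

lemma ev_pos : ∀ᶠ p : X × ℝ in cfil x₀, 0 < p.2 :=
  (tendsto_snd (f := nhds x₀)).eventually eventually_mem_nhdsWithin

lemma cd_subadd (hb : ∀ h : X, ∀ᶠ p in cfil x₀, |cquot g h p| ≤ K' * ‖h‖) (h₁ h₂ : X) :
    Filter.limsup (cquot g (h₁ + h₂)) (cfil x₀) ≤
      Filter.limsup (cquot g h₁) (cfil x₀) + Filter.limsup (cquot g h₂) (cfil x₀) := by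
  set A := Filter.limsup (cquot g h₁) (cfil x₀) with hA
  set Bv := Filter.limsup (cquot g h₂) (cfil x₀) with hBv
  refine le_of_forall_pos_le_add fun ε hε => ?_
  have hm : Tendsto (fun p : X × ℝ => (p.1 + p.2 • h₂, p.2)) (cfil x₀) (cfil x₀) := by
    refine Tendsto.prodMk ?_ tendsto_snd
    have h2 : Tendsto (fun p : X × ℝ => p.2) (cfil x₀) (nhds 0) :=
      tendsto_snd.mono_right nhdsWithin_le_nhds
    have := (tendsto_fst (g := nhdsWithin (0:ℝ) (Ioi 0))).add (h2.smul_const h₂)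
    simpa [cfil] using this
  have hA' : ∀ᶠ p in cfil x₀, cquot g h₁ (p.1 + p.2 • h₂, p.2) < A + ε / 2 :=
    hm.eventually (eventually_lt_of_limsup_lt (by linarith) (bddle (hb h₁)))
  have hB' : ∀ᶠ p in cfil x₀, cquot g h₂ p < Bv + ε / 2 :=
    eventually_lt_of_limsup_lt (by linarith) (bddle (hb h₂))
  have hev : ∀ᶠ p in cfil x₀, cquot g (h₁ + h₂) p ≤ A + Bv + ε := by
    filter_upwards [hA', hB', ev_pos] with p k1 k2 k3
    have e1 : p.1 + p.2 • (h₁ + h₂) = (p.1 + p.2 • h₂) + p.2 • h₁ := by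
      rw [smul_add]; abel
    have e2 : cquot g (h₁ + h₂) p =
        cquot g h₁ (p.1 + p.2 • h₂, p.2) + cquot g h₂ p := by
      simp only [cquot, e1]
      rw [← add_div, sub_add_sub_cancel]
    rw [e2]; linarith
  exact limsup_le_of_le (cobddle (hb (h₁ + h₂))) hev

lemma cd_smul_le (hb : ∀ h : X, ∀ᶠ p in cfil x₀, |cquot g h p| ≤ K' * ‖h‖)
    {c : ℝ} (hc : 0 < c) (h : X) :
    Filter.limsup (cquot g (c • h)) (cfil x₀) ≤ c * Filter.limsup (cquot g h) (cfil x₀) := by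
  set L := Filter.limsup (cquot g h) (cfil x₀) with hL
  refine le_of_forall_pos_le_add fun ε hε => ?_
  have hmul : Tendsto (fun t : ℝ => c * t) (nhdsWithin (0:ℝ) (Ioi 0)) (nhdsWithin (0:ℝ) (Ioi 0)) := by
    apply tendsto_nhdsWithin_of_tendsto_nhds_of_eventually_within
    · have h0 : Tendsto (fun t : ℝ => c * t) (nhds 0) (nhds (c * 0)) :=
        (continuous_mul_left c).tendsto (0:ℝ)
      rw [mul_zero] at h0
      exact h0.mono_left nhdsWithin_le_nhds
    · filter_upwards [eventually_mem_nhdsWithin] with t ht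
      exact mul_pos hc ht
  have hm : Tendsto (fun p : X × ℝ => (p.1, c * p.2)) (cfil x₀) (cfil x₀) :=
    Tendsto.prodMk tendsto_fst (hmul.comp tendsto_snd)
  have hA' : ∀ᶠ p in cfil x₀, cquot g h (p.1, c * p.2) < L + ε / c :=
    hm.eventually (eventually_lt_of_limsup_lt (by have : 0 < ε / c := div_pos hε hc; linarith) (bddle (hb h)))
  have hev : ∀ᶠ p in cfil x₀, cquot g (c • h) p ≤ c * L + ε := by
    filter_upwards [hA', ev_pos] with p k1 k2
    have e2 : cquot g (c • h) p = c * cquot g h (p.1, c * p.2) := by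
      simp only [cquot]
      rw [smul_smul, mul_comm p.2 c]
      field_simp
    rw [e2]
    calc c * cquot g h (p.1, c * p.2) ≤ c * (L + ε / c) :=
          mul_le_mul_of_nonneg_left k1.le hc.le
    _ = c * L + ε := by field_simp
  exact limsup_le_of_le (cobddle (hb (c • h))) hev

lemma cd_smul (hb : ∀ h : X, ∀ᶠ p in cfil x₀, |cquot g h p| ≤ K' * ‖h‖)
    {c : ℝ} (hc : 0 < c) (h : X) :
    Filter.limsup (cquot g (c • h)) (cfil x₀) = c * Filter.limsup (cquot g h) (cfil x₀) := by
  refine le_antisymm (cd_smul_le hb hc h) ?_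
  have h2 := cd_smul_le hb (inv_pos.mpr hc) (c • h)
  rw [smul_smul, inv_mul_cancel₀ hc.ne', one_smul] at h2
  calc c * Filter.limsup (cquot g h) (cfil x₀)
      ≤ c * (c⁻¹ * Filter.limsup (cquot g (c • h)) (cfil x₀)) :=
        mul_le_mul_of_nonneg_left h2 hc.le
  _ = Filter.limsup (cquot g (c • h)) (cfil x₀) := by
        rw [← mul_assoc, mul_inv_cancel₀ hc.ne', one_mul]

lemma cd_seq_le (hb : ∀ h : X, ∀ᶠ p in cfil x₀, |cquot g h p| ≤ K' * ‖h‖)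
    {x : ℕ → X} {t : ℕ → ℝ} {y : ℝ} (h : X)
    (hx : Tendsto x atTop (nhds x₀)) (ht0 : ∀ n, 0 < t n)
    (ht : Tendsto t atTop (nhds 0))
    (hq : Tendsto (fun n => cquot g h (x n, t n)) atTop (nhds y)) :
    y ≤ Filter.limsup (cquot g h) (cfil x₀) := by
  have hm : Tendsto (fun n => (x n, t n)) atTop (cfil x₀) :=
    hx.prodMk (tendsto_nhdsWithin_iff.mpr ⟨ht, Eventually.of_forall ht0⟩)
  refine le_of_forall_pos_le_add fun ε hε => ?_
  have hfreq : ∃ᶠ p in cfil x₀, y - ε ≤ cquot g h p := by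
    rw [frequently_iff]
    intro S hS
    have h1 : ∀ᶠ n in atTop, (x n, t n) ∈ S := hm.eventually_mem hS
    have h2 : ∀ᶠ n in atTop, y - ε ≤ cquot g h (x n, t n) :=
      hq.eventually (eventually_ge_nhds (by linarith))
    obtain ⟨n, hn1, hn2⟩ := (h1.and h2).exists
    exact ⟨_, hn1, hn2⟩
  have := le_limsup_of_frequently_le hfreq (bddle (hb h))
  linarith


lemma cquot_bound (g : X → ℝ) (x₀ : X) {r K' : ℝ} (hr : 0 < r)
    (hg : ∀ x ∈ ball x₀ r, ∀ y ∈ ball x₀ r, |g x - g y| ≤ K' * ‖x - y‖) (h : X) :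
    ∀ᶠ p in cfil x₀, |cquot g h p| ≤ K' * ‖h‖ := by
  have h1 : ∀ᶠ x in nhds x₀, x ∈ ball x₀ (r/2) := ball_mem_nhds _ (by linarith)
  have h2 : ∀ᶠ t in nhdsWithin (0:ℝ) (Ioi 0), t ∈ Ioo 0 ((r/2)/(‖h‖+1)) :=
    Ioo_mem_nhdsGT_of_mem ⟨le_refl _, by positivity⟩
  filter_upwards [Filter.Eventually.prod_mk h1 h2] with p hp
  obtain ⟨hx, ht⟩ := hp
  have ht0 : 0 < p.2 := ht.1
  have hth : p.2 * ‖h‖ < r / 2 := by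
    have := (lt_div_iff₀ (by positivity : (0:ℝ) < ‖h‖ + 1)).mp ht.2
    nlinarith [norm_nonneg h, ht0]
  have hmem1 : p.1 ∈ ball x₀ r := ball_subset_ball (by linarith) hx
  have hmem2 : p.1 + p.2 • h ∈ ball x₀ r := by
    rw [mem_ball] at hx ⊢
    calc dist (p.1 + p.2 • h) x₀ ≤ dist (p.1 + p.2 • h) p.1 + dist p.1 x₀ := dist_triangle _ _ _
    _ < r / 2 + r / 2 := by
        refine add_lt_add_of_le_of_lt ?_ hx
        rw [dist_eq_norm, add_sub_cancel_left, norm_smul, Real.norm_eq_abs,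
          abs_of_pos ht0]
        exact hth.le
    _ = r := by ring
  have key : |g (p.1 + p.2 • h) - g p.1| ≤ K' * (p.2 * ‖h‖) := by
    have := hg _ hmem2 _ hmem1
    rwa [add_sub_cancel_left, norm_smul, Real.norm_eq_abs, abs_of_pos ht0] at this
  rw [cquot, abs_div, abs_of_pos ht0, div_le_iff₀ ht0]
  calc |g (p.1 + p.2 • h) - g p.1| ≤ K' * (p.2 * ‖h‖) := key
  _ = K' * ‖h‖ * p.2 := by ring


lemma exists_clarke_functional (g : X → ℝ) (x₀ : X) {K' : ℝ} (hK' : 0 ≤ K')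
    (hb : ∀ h : X, ∀ᶠ p in cfil x₀, |cquot g h p| ≤ K' * ‖h‖)
    {d : X} (hd : d ≠ 0) {y : ℝ}
    (hy1 : y ≤ Filter.limsup (cquot g d) (cfil x₀))
    (hy2 : -y ≤ Filter.limsup (cquot g (-d)) (cfil x₀)) :
    ∃ L : X →L[ℝ] ℝ, (∀ h, L h ≤ Filter.limsup (cquot g h) (cfil x₀)) ∧ L d = y := by
  set N : X → ℝ := fun h => Filter.limsup (cquot g h) (cfil x₀) with hN
  set f : X →ₗ.[ℝ] ℝ := LinearPMap.mkSpanSingleton d y hd with hf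
  have hfle : ∀ z : f.domain, f z ≤ N z := by
    rintro ⟨z, hz⟩
    obtain ⟨c, hc⟩ := (Submodule.mem_span_singleton).mp hz
    -- hc : c • d = z
    have hz' : c • d ∈ f.domain := by rw [hc]; exact hz
    have hval : f ⟨z, hz⟩ = c • y := by
      rw [show (⟨z, hz⟩ : f.domain) = ⟨c • d, hz'⟩ from Subtype.ext hc.symm]
      exact LinearPMap.mkSpanSingleton'_apply d y _ c _
    rw [hval]
    rcases lt_trichotomy c 0 with hclt | hc0 | hcgt
    · have e1 : (⟨z, hz⟩ : f.domain).val = (-c) • (-d) := by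
        simp [← hc, smul_neg]
      rw [e1, smul_eq_mul]
      have := cd_smul hb (by linarith : (0:ℝ) < -c) (-d)
      calc c * y = (-c) * (-y) := by ring
      _ ≤ (-c) * Filter.limsup (cquot g (-d)) (cfil x₀) :=
          mul_le_mul_of_nonneg_left hy2 (by linarith)
      _ = N ((-c) • (-d)) := (cd_smul hb (by linarith) (-d)).symm
    · subst hc0
      have e1 : (⟨z, hz⟩ : f.domain).val = (0:X) := by simp [← hc]
      rw [e1, smul_eq_mul, zero_mul]
      exact le_of_eq cd_zero'.symm
    · have e1 : (⟨z, hz⟩ : f.domain).val = c • d := hc.symm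
      rw [e1, smul_eq_mul]
      calc c * y ≤ c * Filter.limsup (cquot g d) (cfil x₀) :=
          mul_le_mul_of_nonneg_left hy1 hcgt.le
      _ = N (c • d) := (cd_smul hb hcgt d).symm
  obtain ⟨G, hG1, hG2⟩ := exists_extension_of_le_sublinear f N
    (fun c hc x => cd_smul hb hc x) (cd_subadd hb) hfle
  have hGbound : ∀ x : X, ‖G x‖ ≤ K' * ‖x‖ := by
    intro x
    rw [Real.norm_eq_abs, abs_le]
    constructor
    · have h1 : G (-x) ≤ N (-x) := hG2 (-x)
      rw [map_neg] at h1
      have h2 : N (-x) ≤ K' * ‖x‖ := by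
        have := cd_le (hb (-x)); rwa [norm_neg] at this
      linarith
    · exact (hG2 x).trans (cd_le (hb x))
  refine ⟨LinearMap.mkContinuous G K' hGbound, fun h => ?_, ?_⟩
  · exact hG2 h
  · have hdmem : d ∈ f.domain := by
      rw [hf, LinearPMap.domain_mkSpanSingleton]
      exact Submodule.mem_span_singleton_self d
    have := hG1 ⟨d, hdmem⟩
    rw [LinearPMap.mkSpanSingleton_apply ℝ ℝ hd y] at this
    exact this


end ClarkeAux

set_option maxHeartbeats 1000000 in
theorem stmt8 {X : Type*} [NormedAddCommGroup X] [NormedSpace ℝ X] [CompleteSpace X]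
    (hseq : ∀ L : ℕ → X →L[ℝ] ℝ, (∀ n, ‖L n‖ ≤ 1) →
      ∃ (L₀ : X →L[ℝ] ℝ) (φ : ℕ → ℕ), StrictMono φ ∧
        ∀ x, Filter.Tendsto (fun n => L (φ n) x) Filter.atTop (nhds (L₀ x)))
    {D : Set X} (hD : IsOpen D) (H : X → ℝ) (H' : X → X →L[ℝ] ℝ)
    (hH : IsC11On H H' D) {x₀ : X} (hx₀ : x₀ ∈ D) (d : X) :
    (secondWeakDirDeriv H H' x₀ d).Nonempty ∧
      secondWeakDirDeriv H H' x₀ d ⊆ {r : ℝ | ∃ L ∈ secondSubdiff H' x₀ d, r = L d} := by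
  classical
  -- Set up local Lipschitz data
  obtain ⟨ε₀, hε₀, K, hK⟩ := hH.2 x₀ hx₀
  obtain ⟨r₁, hr₁, hball⟩ := Metric.isOpen_iff.mp hD x₀ hx₀
  set r : ℝ := min r₁ ε₀ with hrdef
  have hr : 0 < r := lt_min hr₁ hε₀
  have hsubD : Metric.ball x₀ r ⊆ D := fun z hz =>
    hball (ball_subset_ball (min_le_left _ _) hz)
  have hsubε : Metric.ball x₀ r ⊆ Metric.ball x₀ ε₀ ∩ D := fun z hz =>
    ⟨ball_subset_ball (min_le_right _ _) hz, hsubD hz⟩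
  set g : X → ℝ := fun x => H' x d with hgdef
  set K' : ℝ := K * ‖d‖ with hK'def
  have hK'0 : 0 ≤ K' := mul_nonneg K.2 (norm_nonneg d)
  have hg : ∀ x ∈ Metric.ball x₀ r, ∀ z ∈ Metric.ball x₀ r,
      |g x - g z| ≤ K' * ‖x - z‖ := by
    intro x hx z hz
    have h1 : dist (H' x) (H' z) ≤ K * dist x z :=
      hK.dist_le_mul x (hsubε hx) z (hsubε hz)
    calc |g x - g z| = ‖(H' x - H' z) d‖ := by
          rw [hgdef]; simp [Real.norm_eq_abs]
    _ ≤ ‖H' x - H' z‖ * ‖d‖ := (H' x - H' z).le_opNorm d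
    _ ≤ (K * ‖x - z‖) * ‖d‖ := by
          have : ‖H' x - H' z‖ ≤ K * ‖x - z‖ := by
            rw [← dist_eq_norm, ← dist_eq_norm]; exact h1
          exact mul_le_mul_of_nonneg_right this (norm_nonneg d)
    _ = K' * ‖x - z‖ := by rw [hK'def]; ring
  have hb : ∀ h : X, ∀ᶠ p in cfil x₀, |cquot g h p| ≤ K' * ‖h‖ :=
    cquot_bound g x₀ hr hg
  by_cases hd : d = 0
  · -- degenerate direction
    subst hd
    have hfun : ∀ y : ℝ,
        (fun ε : ℝ => ‖y - (2 / ε ^ 2) • (H (x₀ + ε • (0:X)) - H x₀ - ε • (H' x₀ 0))‖)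
          = fun _ : ℝ => |y| := by
      intro y; funext ε; simp
    have hmem : ∀ y : ℝ, y ∈ secondWeakDirDeriv H H' x₀ (0:X) ↔ |y| = 0 := by
      intro y
      rw [secondWeakDirDeriv, mem_setOf_eq, hfun y, liminf_const]
    constructor
    · exact ⟨0, (hmem 0).mpr (abs_zero)⟩
    · intro y hy
      have hy0 : y = 0 := abs_eq_zero.mp ((hmem y).mp hy)
      refine ⟨0, fun h => ?_, by simp [hy0]⟩
      simp only [ContinuousLinearMap.zero_apply]
      have hcd : clarkeDeriv (fun x => H' x (0:X)) x₀ h = 0 := by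
        rw [clarkeDeriv_eq]
        have he : cquot (fun x => H' x (0:X)) h = fun _ : X × ℝ => (0:ℝ) := by
          funext p; simp [cquot]
        rw [he, limsup_const]
      rw [hcd]
  · -- main case: d ≠ 0
    have hd0 : 0 < ‖d‖ := norm_pos_iff.mpr hd
    set δ : ℝ := r / ‖d‖ with hδdef
    have hδ : 0 < δ := div_pos hr hd0
    have hmemb : ∀ t : ℝ, |t| < δ → x₀ + t • d ∈ Metric.ball x₀ r := by
      intro t htl
      rw [mem_ball, dist_eq_norm, add_sub_cancel_left, norm_smul, Real.norm_eq_abs]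
      calc |t| * ‖d‖ < δ * ‖d‖ := mul_lt_mul_of_pos_right htl hd0
      _ = r := by rw [hδdef]; field_simp
    set φ : ℝ → ℝ := fun t => H (x₀ + t • d) with hφdef
    set ψ : ℝ → ℝ := fun t => g (x₀ + t • d) with hψdef
    have hderiv : ∀ t : ℝ, |t| < δ → HasDerivAt φ (ψ t) t := by
      intro t htl
      have hxD : x₀ + t • d ∈ D := hsubD (hmemb t htl)
      have h1 : HasDerivAt (fun s : ℝ => H (x₀ + t • d + s • d)) (H' (x₀ + t • d) d) 0 :=
        hH.1 _ hxD d
      have h2 : HasDerivAt (fun s : ℝ => s - t) 1 t := (hasDerivAt_id t).sub_const t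
      have h3 := HasDerivAt.comp t (by simpa using h1) h2
      have he : ((fun s : ℝ => H (x₀ + t • d + s • d)) ∘ fun s : ℝ => s - t) = φ := by
        funext s
        simp only [Function.comp_apply, hφdef]
        congr 1
        rw [sub_smul]; abel
      rw [he, mul_one] at h3
      exact h3
    have hψlip : ∀ s t : ℝ, |s| < δ → |t| < δ → |ψ s - ψ t| ≤ (K' * ‖d‖) * |s - t| := by
      intro s t hs ht
      have hgl := hg _ (hmemb s hs) _ (hmemb t ht)
      have he : (x₀ + s • d) - (x₀ + t • d) = (s - t) • d := by
        rw [sub_smul]; abel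
      rw [he, norm_smul, Real.norm_eq_abs] at hgl
      calc |ψ s - ψ t| ≤ K' * (|s - t| * ‖d‖) := hgl
      _ = (K' * ‖d‖) * |s - t| := by ring
    set C : ℝ := K' * ‖d‖ with hCdef
    have hC0 : 0 ≤ C := mul_nonneg hK'0 (norm_nonneg d)
    have hTaylor : ∀ ε : ℝ, 0 < ε → ε < δ → |φ ε - φ 0 - ε * ψ 0| ≤ C * ε * ε := by
      intro ε hε1 hε2
      have hIcc : ∀ t ∈ Icc (0:ℝ) ε, |t| < δ := by
        intro t ht
        rw [abs_lt]
        exact ⟨by linarith [ht.1], by linarith [ht.2]⟩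
      have hu : ∀ t ∈ Icc (0:ℝ) ε,
          HasDerivWithinAt (fun t => φ t - t * ψ 0) (ψ t - ψ 0) (Icc 0 ε) t := by
        intro t ht
        have h1 := (hderiv t (hIcc t ht)).sub ((hasDerivAt_id t).mul_const (ψ 0))
        rw [one_mul] at h1
        exact h1.hasDerivWithinAt
      have hbd : ∀ t ∈ Icc (0:ℝ) ε, ‖ψ t - ψ 0‖ ≤ C * ε := by
        intro t ht
        rw [Real.norm_eq_abs]
        have h2 := hψlip t 0 (hIcc t ht) (by rw [abs_zero]; exact hδ)
        rw [sub_zero] at h2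
        calc |ψ t - ψ 0| ≤ C * |t| := h2
        _ ≤ C * ε := by
            refine mul_le_mul_of_nonneg_left ?_ hC0
            rw [abs_of_nonneg ht.1]; exact ht.2
      have key := (convex_Icc (0:ℝ) ε).norm_image_sub_le_of_norm_hasDerivWithin_le
        hu hbd (left_mem_Icc.mpr hε1.le) (right_mem_Icc.mpr hε1.le)
      rw [Real.norm_eq_abs, Real.norm_eq_abs, sub_zero] at key
      calc |φ ε - φ 0 - ε * ψ 0| = |(φ ε - ε * ψ 0) - (φ 0 - 0 * ψ 0)| := by
            congr 1; ring
      _ ≤ C * ε * |ε| := key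
      _ = C * ε * ε := by rw [abs_of_pos hε1]
    set Q : ℝ → ℝ := fun ε => (2 / ε ^ 2) * (φ ε - φ 0 - ε * ψ 0) with hQdef
    have hfun : ∀ y : ℝ,
        (fun ε : ℝ => ‖y - (2 / ε ^ 2) • (H (x₀ + ε • d) - H x₀ - ε • (H' x₀ d))‖)
          = fun ε : ℝ => |y - Q ε| := by
      intro y; funext ε
      rw [Real.norm_eq_abs]
      have e0 : x₀ + (0:ℝ) • d = x₀ := by simp
      simp only [hQdef, hφdef, hψdef, hgdef, smul_eq_mul, e0]
    have hmemQ : ∀ y : ℝ, y ∈ secondWeakDirDeriv H H' x₀ d ↔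
        Filter.liminf (fun ε => |y - Q ε|) (nhdsWithin (0:ℝ) (Ioi 0)) = 0 := by
      intro y
      rw [secondWeakDirDeriv, mem_setOf_eq, hfun y]
    have hQb : ∀ ε ∈ Ioo (0:ℝ) δ, |Q ε| ≤ 2 * C := by
      intro ε hε
      have hε0 : (0:ℝ) < ε := hε.1
      have hQe : Q ε = (2 / ε ^ 2) * (φ ε - φ 0 - ε * ψ 0) := by rw [hQdef]
      rw [hQe]
      calc |(2 / ε ^ 2) * (φ ε - φ 0 - ε * ψ 0)|
          = (2 / ε ^ 2) * |φ ε - φ 0 - ε * ψ 0| := by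
            rw [abs_mul, abs_of_pos (by positivity : (0:ℝ) < 2 / ε ^ 2)]
      _ ≤ (2 / ε ^ 2) * (C * ε * ε) :=
            mul_le_mul_of_nonneg_left (hTaylor ε hε0 hε.2) (by positivity)
      _ = 2 * C := by field_simp
    have hQev : ∀ᶠ ε in nhdsWithin (0:ℝ) (Ioi 0), |Q ε| ≤ 2 * C :=
      eventually_of_mem (Ioo_mem_nhdsGT_of_mem ⟨le_refl (0:ℝ), hδ⟩) hQb
    have hbQ : IsBoundedUnder (· ≤ ·) (nhdsWithin (0:ℝ) (Ioi 0)) Q :=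
      ⟨2 * C, eventually_map.mpr (hQev.mono fun _ k => (abs_le.mp k).2)⟩
    have hbQg : IsBoundedUnder (· ≥ ·) (nhdsWithin (0:ℝ) (Ioi 0)) Q :=
      ⟨-(2 * C), eventually_map.mpr (hQev.mono fun _ k => (abs_le.mp k).1)⟩
    have hcoQ : IsCoboundedUnder (· ≤ ·) (nhdsWithin (0:ℝ) (Ioi 0)) Q :=
      hbQg.isCoboundedUnder_le
    have absQbdd : ∀ y : ℝ,
        IsBoundedUnder (· ≤ ·) (nhdsWithin (0:ℝ) (Ioi 0)) (fun ε => |y - Q ε|) := by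
      intro y
      refine ⟨|y| + 2 * C, eventually_map.mpr (hQev.mono fun ε k => ?_)⟩
      calc |y - Q ε| ≤ |y| + |Q ε| := abs_sub y (Q ε)
      _ ≤ |y| + 2 * C := by linarith
    have absQbdd0 : ∀ y : ℝ,
        IsBoundedUnder (· ≥ ·) (nhdsWithin (0:ℝ) (Ioi 0)) (fun ε => |y - Q ε|) :=
      fun y => ⟨0, eventually_map.mpr (Eventually.of_forall fun ε => abs_nonneg _)⟩
    have hne : (secondWeakDirDeriv H H' x₀ d).Nonempty := by
      set y := Filter.limsup Q (nhdsWithin (0:ℝ) (Ioi 0)) with hydef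
      refine ⟨y, (hmemQ y).mpr ?_⟩
      have h0le : 0 ≤ Filter.liminf (fun ε => |y - Q ε|) (nhdsWithin (0:ℝ) (Ioi 0)) :=
        le_liminf_of_le ((absQbdd y).isCoboundedUnder_ge)
          (Eventually.of_forall fun ε => abs_nonneg _)
      have h1 : ∀ ε' : ℝ, 0 < ε' →
          Filter.liminf (fun ε => |y - Q ε|) (nhdsWithin (0:ℝ) (Ioi 0)) ≤ 0 + ε' := by
        intro ε' hε'
        have hfr : ∃ᶠ ε in nhdsWithin (0:ℝ) (Ioi 0), y - ε' < Q ε :=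
          frequently_lt_of_lt_limsup hcoQ (by rw [← hydef]; linarith)
        have hev2 : ∀ᶠ ε in nhdsWithin (0:ℝ) (Ioi 0), Q ε < y + ε' :=
          eventually_lt_of_limsup_lt (by rw [← hydef]; linarith) hbQ
        have h3 : ∃ᶠ ε in nhdsWithin (0:ℝ) (Ioi 0), |y - Q ε| ≤ 0 + ε' :=
          (hfr.and_eventually hev2).mono (fun ε hε => by
            rw [zero_add, abs_le]
            constructor <;> [linarith [hε.2]; linarith [hε.1]])
        exact liminf_le_of_frequently_le h3 (absQbdd0 y)
      have h2 : Filter.liminf (fun ε => |y - Q ε|) (nhdsWithin (0:ℝ) (Ioi 0)) ≤ 0 :=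
        le_of_forall_pos_le_add h1
      linarith
    refine ⟨hne, ?_⟩
    intro y hy
    rw [hmemQ y] at hy
    have hEx : ∀ n : ℕ, ∃ ε : ℝ,
        |y - Q ε| < 1/(n+1) ∧ (ε ∈ Ioo 0 δ ∧ ε < 1/(n+1)) := by
      intro n
      have hpos : (0:ℝ) < 1/(n+1) := by positivity
      have h1 : ∃ᶠ ε in nhdsWithin (0:ℝ) (Ioi 0), |y - Q ε| < 1/(n+1) :=
        frequently_lt_of_liminf_lt ((absQbdd y).isCoboundedUnder_ge) (by rw [hy]; exact hpos)
      have h2 : ∀ᶠ ε in nhdsWithin (0:ℝ) (Ioi 0), ε ∈ Ioo 0 δ ∧ ε < 1/(n+1) := by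
        have hIooMem : Ioo (0:ℝ) (min δ (1/(n+1))) ∈ nhdsWithin (0:ℝ) (Ioi 0) :=
          Ioo_mem_nhdsGT_of_mem ⟨le_refl (0:ℝ), lt_min hδ hpos⟩
        filter_upwards [eventually_of_mem hIooMem fun x hx => hx] with ε hε
        exact ⟨⟨hε.1, hε.2.trans_le (min_le_left _ _)⟩, hε.2.trans_le (min_le_right _ _)⟩
      exact (h1.and_eventually h2).exists
    choose e he3 hprop using hEx
    have he1 : ∀ n, e n ∈ Ioo 0 δ := fun n => (hprop n).1
    have he2 : ∀ n, e n < 1/(n+1) := fun n => (hprop n).2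
    have htend : Tendsto (fun n : ℕ => 1/((n:ℝ)+1)) atTop (nhds 0) :=
      tendsto_one_div_add_atTop_nhds_zero_nat
    have hetend : Tendsto e atTop (nhds 0) :=
      squeeze_zero (fun n => (he1 n).1.le) (fun n => (he2 n).le) htend
    have hQy : Tendsto (fun n => Q (e n)) atTop (nhds y) := by
      have h0 : Tendsto (fun n => y - Q (e n)) atTop (nhds 0) :=
        squeeze_zero_norm (fun n => by rw [Real.norm_eq_abs]; exact (he3 n).le) htend
      have h1 := (tendsto_const_nhds (x := y) (f := atTop)).sub h0
      simpa using h1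
    have hMVT : ∀ n : ℕ, ∃ ξ, ξ ∈ Ioo 0 (e n) ∧ Q (e n) = (ψ ξ - ψ 0) / ξ := by
      intro n
      obtain ⟨hen0, henδ⟩ := he1 n
      have hIcc : ∀ t ∈ Icc (0:ℝ) (e n), |t| < δ := by
        intro t ht
        rw [abs_lt]
        exact ⟨by linarith [ht.1], by linarith [ht.2]⟩
      have hfc : ContinuousOn (fun t => φ t - t * ψ 0) (Icc 0 (e n)) := by
        intro t ht
        have h1 := (hderiv t (hIcc t ht)).sub ((hasDerivAt_id t).mul_const (ψ 0))
        exact h1.continuousAt.continuousWithinAt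
      have hff' : ∀ t ∈ Ioo (0:ℝ) (e n),
          HasDerivAt (fun t => φ t - t * ψ 0) (ψ t - ψ 0) t := by
        intro t ht
        have h1 := (hderiv t (hIcc t ⟨ht.1.le, ht.2.le⟩)).sub
          ((hasDerivAt_id t).mul_const (ψ 0))
        rwa [one_mul] at h1
      have hgc : ContinuousOn (fun t : ℝ => t ^ 2) (Icc 0 (e n)) :=
        (continuous_pow 2).continuousOn
      have hgg' : ∀ t ∈ Ioo (0:ℝ) (e n), HasDerivAt (fun t : ℝ => t ^ 2) (2 * t) t := by
        intro t _
        have h1 := hasDerivAt_pow 2 t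
        norm_num at h1
        exact h1
      obtain ⟨c, hcmem, hceq⟩ := exists_ratio_hasDerivAt_eq_ratio_slope
        (fun t => φ t - t * ψ 0) (fun t => ψ t - ψ 0) hen0 hfc hff'
        (fun t : ℝ => t ^ 2) (fun t => 2 * t) hgc hgg'
      refine ⟨c, hcmem, ?_⟩
      have hc0 : c ≠ 0 := ne_of_gt hcmem.1
      have hee0 : e n ≠ 0 := ne_of_gt hen0
      show (2 / (e n) ^ 2) * (φ (e n) - φ 0 - (e n) * ψ 0) = (ψ c - ψ 0) / c
      rw [div_mul_eq_mul_div, div_eq_div_iff (by positivity) hc0]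
      linear_combination -hceq
    choose ξ hξmem hξeq using hMVT
    have hξ0 : ∀ n, 0 < ξ n := fun n => (hξmem n).1
    have hξtend : Tendsto ξ atTop (nhds 0) :=
      squeeze_zero (fun n => (hξ0 n).le) (fun n => (hξmem n).2.le) hetend
    have hquot1 : (fun n => cquot g d (x₀, ξ n)) = fun n => Q (e n) := by
      funext n
      rw [hξeq n]
      show (g (x₀ + ξ n • d) - g x₀) / ξ n = (ψ (ξ n) - ψ 0) / ξ n
      have e1 : ψ (ξ n) = g (x₀ + ξ n • d) := by rw [hψdef]
      have e2 : ψ 0 = g x₀ := by rw [hψdef]; simp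
      rw [e1, e2]
    have hq1 : Tendsto (fun n => cquot g d (x₀, ξ n)) atTop (nhds y) := by
      rw [hquot1]; exact hQy
    have hy1 : y ≤ Filter.limsup (cquot g d) (cfil x₀) :=
      cd_seq_le hb d tendsto_const_nhds hξ0 hξtend hq1
    have hxtend : Tendsto (fun n => x₀ + ξ n • d) atTop (nhds x₀) := by
      have h1 := (tendsto_const_nhds (x := x₀) (f := atTop)).add (hξtend.smul_const d)
      simpa using h1
    have hquot2 : (fun n => cquot g (-d) (x₀ + ξ n • d, ξ n)) = fun n => -(Q (e n)) := by
      funext n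
      rw [hξeq n]
      show (g ((x₀ + ξ n • d) + ξ n • (-d)) - g (x₀ + ξ n • d)) / ξ n
        = -((ψ (ξ n) - ψ 0) / ξ n)
      have e1 : (x₀ + ξ n • d) + ξ n • (-d) = x₀ := by rw [smul_neg]; abel
      have e2 : ψ (ξ n) = g (x₀ + ξ n • d) := by rw [hψdef]
      have e3 : ψ 0 = g x₀ := by rw [hψdef]; simp
      rw [e1, e2, e3, ← neg_sub, neg_div]
    have hq2 : Tendsto (fun n => cquot g (-d) (x₀ + ξ n • d, ξ n)) atTop (nhds (-y)) := by
      rw [hquot2]; exact hQy.neg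
    have hy2 : -y ≤ Filter.limsup (cquot g (-d)) (cfil x₀) :=
      cd_seq_le hb (-d) hxtend hξ0 hξtend hq2
    obtain ⟨L, hL1, hL2⟩ := exists_clarke_functional g x₀ hK'0 hb hd hy1 hy2
    exact ⟨L, fun h => hL1 h, hL2.symm⟩
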